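/- (Blending lemma) Let F : ℓⁿ × ℓᵐ → ℓⁿ be linear and strictly causal, and let (Rⁱ, Mⁱ), i = 1..N, be linear causal achievable closed-loop maps of F (each satisfying Rⁱ = F(Rⁱ, Mⁱ) + I with Rⁱ - I strictly causal). Let Gⁱ : ℓⁿ → ℓⁿ be (possibly nonlinear) causal operators with Σ_{i=1}^N Gⁱ = I. Then Ψˣ = I + Σᵢ (Rⁱ - I)∘Gⁱ and Ψᵘ = Σᵢ Mⁱ∘Gⁱ define an achievable closed-loop map of F, i.e. Ψˣ = F(Ψˣ, Ψᵘ) + I. -/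

import Mathlib

/-- A causal operator on sequence space: the t-th output depends only on inputs 0..t. -/
def Causal {E F : Type*} (Q : (ℕ → E) → (ℕ → F)) : Prop :=
  ∀ x y : ℕ → E, ∀ t, (∀ s, s ≤ t → x s = y s) → Q x t = Q y t

/-- A strictly causal operator: the t-th output depends only on inputs 0..t-1. -/
def StrictlyCausal {E F : Type*} (Q : (ℕ → E) → (ℕ → F)) : Prop :=
  ∀ x y : ℕ → E, ∀ t, (∀ s, s < t → x s = y s) → Q x t = Q y t

/-- A strictly causal operator of two sequence arguments. -/
def StrictlyCausal2 {E U F : Type*} (Φ : (ℕ → E) → (ℕ → U) → (ℕ → F)) : Prop :=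
  ∀ x y u v, ∀ t, (∀ s, s < t → x s = y s) → (∀ s, s < t → u s = v s) →
    Φ x u t = Φ y v t

/-- blending lemma: for a linear, strictly causal plant `F`, linear causal
achievable closed-loop maps `(Rⁱ,Mⁱ)` of `F`, and (possibly nonlinear) causal operators
`Gⁱ` with `Σᵢ Gⁱ = I`, the maps `Ψˣ = I + Σᵢ (Rⁱ - I)∘Gⁱ`, `Ψᵘ = Σᵢ Mⁱ∘Gⁱ` satisfy the
CLM equation `Ψˣ = F(Ψˣ,Ψᵘ) + I`, hence define an achievable closed-loop map of `F`. -/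
theorem blending_lemma {n m : ℕ}
    (F : (ℕ → Fin n → ℝ) → (ℕ → Fin m → ℝ) → (ℕ → Fin n → ℝ))
    (hF : StrictlyCausal2 F)
    (hFadd : ∀ x x' u u', F (x + x') (u + u') = F x u + F x' u')
    (hFsmul : ∀ (c : ℝ) x u, F (c • x) (c • u) = c • F x u)
    (N : ℕ)
    (R : Fin N → (ℕ → Fin n → ℝ) → (ℕ → Fin n → ℝ))
    (M : Fin N → (ℕ → Fin n → ℝ) → (ℕ → Fin m → ℝ))
    (G : Fin N → (ℕ → Fin n → ℝ) → (ℕ → Fin n → ℝ))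
    (hRcausal : ∀ i, Causal (R i)) (hMcausal : ∀ i, Causal (M i))
    (hGcausal : ∀ i, Causal (G i))
    (hRadd : ∀ i x x', R i (x + x') = R i x + R i x')
    (hRsmul : ∀ i (c : ℝ) x, R i (c • x) = c • R i x)
    (hMadd : ∀ i x x', M i (x + x') = M i x + M i x')
    (hMsmul : ∀ i (c : ℝ) x, M i (c • x) = c • M i x)
    (hRI : ∀ i, StrictlyCausal (fun a => R i a - a))
    (hCLM : ∀ i w, R i w = F (R i w) (M i w) + w)
    (hGsum : ∀ w, ∑ i, G i w = w) :
    ∀ w, w + ∑ i, (R i (G i w) - G i w)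
      = F (w + ∑ i, (R i (G i w) - G i w)) (∑ i, M i (G i w)) + w := by
  intro w
  have h00 : F 0 0 = 0 := by
    have := hFsmul 0 0 0
    simpa using this
  have hFsum : ∀ (s : Finset (Fin N)) (x : Fin N → ℕ → Fin n → ℝ)
      (u : Fin N → ℕ → Fin m → ℝ),
      F (∑ i ∈ s, x i) (∑ i ∈ s, u i) = ∑ i ∈ s, F (x i) (u i) := by
    intro s x u
    induction s using Finset.induction with
    | empty => simpa using h00
    | insert _ _ h ih =>
      rw [Finset.sum_insert h, Finset.sum_insert h, Finset.sum_insert h, hFadd, ih]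
  have key : w + ∑ i, (R i (G i w) - G i w) = ∑ i, R i (G i w) := by
    rw [Finset.sum_sub_distrib, hGsum]; abel
  rw [key, hFsum Finset.univ (fun i => R i (G i w)) (fun i => M i (G i w))]
  have hF' : ∀ i, F (R i (G i w)) (M i (G i w)) = R i (G i w) - G i w :=
    fun i => eq_sub_of_add_eq (hCLM i (G i w)).symm
  simp_rw [hF', Finset.sum_sub_distrib, hGsum]
  abel
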